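/- Let f, g : {-1,1}^n → {-1,1} be two Boolean functions whose Fourier expansions have, respectively, l₁ and l₂ nonzero terms (i.e., f has exactly l₁ subsets S with f̂(S) ≠ 0 and g has exactly l₂ such subsets), let t ∈ {1,...,n} and ε ≥ 0. If both Inf_t[f] ≤ ε and Inf_t[g] ≤ ε, then Inf_t[f·g] ≤ 4 ε l, where l = l₁ l₂ and f·g is the pointwise product. -/

import Mathlib

open Finset

/-- The embedding of the Boolean cube `{-1,1}^n` into `ℝ^n`. -/
noncomputable def chi {n : ℕ} (x : Fin n → Bool) : Fin n → ℝ :=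
  fun i => if x i then 1 else -1

/-- Expectation of `f` over a uniformly random point of `{-1,1}^n`. -/
noncomputable def expect {n : ℕ} (f : (Fin n → Bool) → ℝ) : ℝ :=
  (∑ x : Fin n → Bool, f x) / 2 ^ n

/-- The Fourier coefficient `f̂(S) = E_x[f(x) ∏_{i ∈ S} x_i]`. -/
noncomputable def fhat {n : ℕ} (f : (Fin n → Bool) → ℝ) (S : Finset (Fin n)) : ℝ :=
  expect fun x => f x * ∏ i ∈ S, chi x i

/-- The influence of coordinate `t` on `f`: `Inf_t[f] = ∑_{S ∋ t} f̂(S)²`. -/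
noncomputable def influence {n : ℕ} (f : (Fin n → Bool) → ℝ) (t : Fin n) : ℝ :=
  ∑ S ∈ univ.filter (fun S : Finset (Fin n) => t ∈ S), (fhat f S) ^ 2

/-- The variance of `f` over a uniformly random point of `{-1,1}^n`:
`Var[f] = E[f²] - (E[f])²`. -/
noncomputable def variance {n : ℕ} (f : (Fin n → Bool) → ℝ) : ℝ :=
  expect (fun x => f x ^ 2) - (expect f) ^ 2

lemma chi_mul_chi {n : ℕ} (x y : Fin n → Bool) (i : Fin n) :
    chi x i * chi y i = if x i = y i then (1:ℝ) else -1 := by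
  unfold chi; rcases x i <;> rcases y i <;> norm_num

lemma orth {n : ℕ} (x y : Fin n → Bool) :
    ∑ S : Finset (Fin n), ∏ i ∈ S, (chi x i * chi y i) =
      if x = y then (2:ℝ)^n else 0 := by
  have h1 : ∏ i : Fin n, (chi x i * chi y i + 1) =
      ∑ S : Finset (Fin n), ∏ i ∈ S, (chi x i * chi y i) := by
    rw [Finset.prod_add, ← Finset.powerset_univ]
    simp
  by_cases h : x = y
  · subst h
    rw [if_pos rfl, ← h1]
    have h2 : ∏ i : Fin n, (chi x i * chi x i + 1) = ∏ _i : Fin n, (2:ℝ) :=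
      Finset.prod_congr rfl (fun i _ => by rw [chi_mul_chi]; norm_num)
    rw [h2]; norm_num
  · simp only [h, if_neg h, ← h1]
    obtain ⟨i, hi⟩ : ∃ i, x i ≠ y i := by
      by_contra hc; push_neg at hc; exact h (funext hc)
    apply Finset.prod_eq_zero (Finset.mem_univ i)
    rw [chi_mul_chi, if_neg hi]; ring

lemma parseval {n : ℕ} (f g : (Fin n → Bool) → ℝ) :
    ∑ S : Finset (Fin n), fhat f S * fhat g S = _root_.expect (fun x => f x * g x) := by
  unfold fhat _root_.expect
  have h2n : (0:ℝ) < 2 ^ n := by positivity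
  rw [eq_div_iff (ne_of_gt h2n)]
  have : ∀ S : Finset (Fin n),
      (∑ x : Fin n → Bool, f x * ∏ i ∈ S, chi x i) / 2 ^ n *
        ((∑ x : Fin n → Bool, g x * ∏ i ∈ S, chi x i) / 2 ^ n) =
      (∑ x : Fin n → Bool, ∑ y : Fin n → Bool,
        f x * g y * ∏ i ∈ S, (chi x i * chi y i)) / (2^n * 2^n) := by
    intro S
    rw [div_mul_div_comm, Finset.sum_mul_sum]
    congr 1
    refine Finset.sum_congr rfl fun x _ => Finset.sum_congr rfl fun y _ => ?_
    rw [Finset.prod_mul_distrib]; ring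
  simp only [this, ← Finset.sum_div]
  rw [Finset.sum_comm]
  have : ∀ x : Fin n → Bool,
      ∑ S : Finset (Fin n), ∑ y : Fin n → Bool,
        f x * g y * ∏ i ∈ S, (chi x i * chi y i)
      = f x * g x * 2 ^ n := by
    intro x
    rw [Finset.sum_comm]
    have : ∀ y : Fin n → Bool,
        ∑ S : Finset (Fin n), f x * g y * ∏ i ∈ S, (chi x i * chi y i)
        = f x * g y * (if x = y then (2:ℝ)^n else 0) := by
      intro y; rw [← Finset.mul_sum, orth]
    simp only [this, mul_ite, mul_zero, ite_mul, zero_mul]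
    simp
  simp only [this]
  rw [← Finset.sum_mul]
  field_simp
section
variable {n : ℕ}

noncomputable def bflip (t : Fin n) (x : Fin n → Bool) : Fin n → Bool :=
  Function.update x t (!x t)

lemma bflip_involutive (t : Fin n) : Function.Involutive (bflip t) := by
  intro x; funext i
  by_cases h : i = t
  · subst h; simp [bflip, Function.update]
  · simp [bflip, Function.update, h]

lemma chi_bflip (t : Fin n) (x : Fin n → Bool) (i : Fin n) :
    chi (bflip t x) i = if i = t then -chi x i else chi x i := by
  by_cases h : i = t
  · subst h; simp only [bflip, Function.update, if_pos rfl]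
    unfold chi; rcases x i <;> norm_num
  · simp [bflip, Function.update, h, chi]

lemma prod_chi_bflip (t : Fin n) (x : Fin n → Bool) (S : Finset (Fin n)) :
    ∏ i ∈ S, chi (bflip t x) i = (if t ∈ S then -1 else 1) * ∏ i ∈ S, chi x i := by
  by_cases ht : t ∈ S
  · rw [if_pos ht, ← Finset.mul_prod_erase S _ ht, ← Finset.mul_prod_erase S (chi x) ht]
    rw [chi_bflip, if_pos rfl]
    rw [Finset.prod_congr rfl (fun i hi => by
      rw [chi_bflip, if_neg (Finset.ne_of_mem_erase hi)])]
    ring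
  · rw [if_neg ht, one_mul]
    exact Finset.prod_congr rfl (fun i hi => by
      rw [chi_bflip, if_neg (by rintro rfl; exact ht hi)])

lemma fhat_comp_bflip (t : Fin n) (f : (Fin n → Bool) → ℝ) (S : Finset (Fin n)) :
    fhat (fun x => f (bflip t x)) S = (if t ∈ S then -1 else 1) * fhat f S := by
  have key : ∑ x : Fin n → Bool, f (bflip t x) * ∏ i ∈ S, chi x i
      = (if t ∈ S then -1 else 1) * ∑ x : Fin n → Bool, f x * ∏ i ∈ S, chi x i := by
    rw [Finset.mul_sum]
    rw [← Function.Bijective.sum_comp ((bflip_involutive t).bijective)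
      (fun y => (if t ∈ S then -1 else 1) * (f y * ∏ i ∈ S, chi y i))]
    refine Finset.sum_congr rfl fun x _ => ?_
    rw [prod_chi_bflip]
    by_cases ht : t ∈ S <;> simp [ht] <;> ring
  unfold fhat _root_.expect
  simp only []
  rw [key, mul_div_assoc]

noncomputable def bderiv (t : Fin n) (f : (Fin n → Bool) → ℝ) : (Fin n → Bool) → ℝ :=
  fun x => (f x - f (bflip t x)) / 2

lemma fhat_bderiv (t : Fin n) (f : (Fin n → Bool) → ℝ) (S : Finset (Fin n)) :
    fhat (bderiv t f) S = if t ∈ S then fhat f S else 0 := by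
  have h : fhat (bderiv t f) S = (fhat f S - fhat (fun x => f (bflip t x)) S) / 2 := by
    unfold fhat _root_.expect bderiv
    rw [div_sub_div_same, ← Finset.sum_sub_distrib]
    have he : ∀ x : Fin n → Bool, (f x - f (bflip t x)) / 2 * ∏ i ∈ S, chi x i
        = (f x * ∏ i ∈ S, chi x i - f (bflip t x) * ∏ i ∈ S, chi x i) / 2 :=
      fun x => by ring
    simp only [he]
    rw [← Finset.sum_div]
    ring
  rw [h, fhat_comp_bflip]
  by_cases ht : t ∈ S <;> simp [ht] <;> ring

lemma influence_eq_expect (t : Fin n) (f : (Fin n → Bool) → ℝ) :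
    influence f t = _root_.expect (fun x => bderiv t f x * bderiv t f x) := by
  rw [← parseval]
  unfold influence
  rw [Finset.sum_filter]
  refine Finset.sum_congr rfl fun S _ => ?_
  rw [fhat_bderiv]
  by_cases ht : t ∈ S <;> simp [ht, pow_two]

lemma inversion (f : (Fin n → Bool) → ℝ) (x : Fin n → Bool) :
    f x = ∑ S : Finset (Fin n), fhat f S * ∏ i ∈ S, chi x i := by
  have h2n : (0:ℝ) < 2 ^ n := by positivity
  unfold fhat _root_.expect
  have : ∀ S : Finset (Fin n),
      (∑ y : Fin n → Bool, f y * ∏ i ∈ S, chi y i) / 2 ^ n * ∏ i ∈ S, chi x i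
      = (∑ y : Fin n → Bool, f y * ∏ i ∈ S, (chi y i * chi x i)) / 2 ^ n := by
    intro S
    rw [div_mul_eq_mul_div, Finset.sum_mul]
    congr 1
    refine Finset.sum_congr rfl fun y _ => ?_
    rw [Finset.prod_mul_distrib]; ring
  simp only [this, ← Finset.sum_div]
  rw [Finset.sum_comm]
  have : ∀ y : Fin n → Bool,
      ∑ S : Finset (Fin n), f y * ∏ i ∈ S, (chi y i * chi x i)
      = f y * (if y = x then (2:ℝ)^n else 0) := by
    intro y; rw [← Finset.mul_sum, orth]
  simp only [this, mul_ite, mul_zero]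
  rw [Finset.sum_ite_eq' Finset.univ x (fun y => f y * 2^n)]
  simp only [Finset.mem_univ, if_true]
  field_simp

end
lemma expect_mono {n : ℕ} {a b : (Fin n → Bool) → ℝ} (h : ∀ x, a x ≤ b x) :
    _root_.expect a ≤ _root_.expect b := by
  unfold _root_.expect
  apply div_le_div_of_nonneg_right (Finset.sum_le_sum fun x _ => h x) (by positivity)

lemma expect_comb {n : ℕ} (a b : (Fin n → Bool) → ℝ) :
    _root_.expect (fun x => 2 * a x + 2 * b x)
      = 2 * _root_.expect a + 2 * _root_.expect b := by
  unfold _root_.expect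
  rw [Finset.sum_add_distrib, ← Finset.mul_sum, ← Finset.mul_sum]
  field_simp

lemma card_pos_of_bool {n : ℕ} (f : (Fin n → Bool) → ℝ)
    (hfb : ∀ x, f x = 1 ∨ f x = -1) :
    1 ≤ (univ.filter fun S : Finset (Fin n) => fhat f S ≠ 0).card := by
  rw [Nat.one_le_iff_ne_zero, Ne, Finset.card_eq_zero]
  intro hemp
  have hall : ∀ S : Finset (Fin n), fhat f S = 0 := by
    intro S
    by_contra hS
    have : S ∈ (univ.filter fun S : Finset (Fin n) => fhat f S ≠ 0) := by
      simp [hS]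
    simp [hemp] at this
  have := inversion f (fun _ => true)
  simp only [hall, zero_mul, Finset.sum_const_zero] at this
  rcases hfb (fun _ => true) with h | h <;> rw [h] at this <;> norm_num at this


/-- If `f, g : {-1,1}^n → {-1,1}` have `l₁` and `l₂` nonzero Fourier terms
respectively, and `Inf_t[f] ≤ ε`, `Inf_t[g] ≤ ε`, then `Inf_t[f·g] ≤ 4 ε l`
where `l = l₁ l₂`. -/
theorem influence_mul_le (n : ℕ) (f g : (Fin n → Bool) → ℝ)
    (hfb : ∀ x, f x = 1 ∨ f x = -1) (hgb : ∀ x, g x = 1 ∨ g x = -1)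
    (l₁ l₂ : ℕ)
    (hl₁ : (univ.filter fun S : Finset (Fin n) => fhat f S ≠ 0).card = l₁)
    (hl₂ : (univ.filter fun S : Finset (Fin n) => fhat g S ≠ 0).card = l₂)
    (t : Fin n) (ε : ℝ) (hε : 0 ≤ ε)
    (hf : influence f t ≤ ε) (hg : influence g t ≤ ε) :
    influence (fun x => f x * g x) t ≤ 4 * ε * (l₁ * l₂ : ℕ) := by
  have key : influence (fun x => f x * g x) t ≤ 4 * ε := by
    rw [influence_eq_expect]
    have hpt : ∀ x, bderiv t (fun x => f x * g x) x * bderiv t (fun x => f x * g x) x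
        ≤ 2 * (bderiv t f x * bderiv t f x) + 2 * (bderiv t g x * bderiv t g x) := by
      intro x
      have hd : bderiv t (fun x => f x * g x) x
          = bderiv t f x * g x + f (bflip t x) * bderiv t g x := by
        unfold bderiv; ring
      have hg1 : g x * g x = 1 := by rcases hgb x with h | h <;> rw [h] <;> norm_num
      have hf1 : f (bflip t x) * f (bflip t x) = 1 := by
        rcases hfb (bflip t x) with h | h <;> rw [h] <;> norm_num
      rw [hd]
      nlinarith [sq_nonneg (bderiv t f x * g x - f (bflip t x) * bderiv t g x),
        sq_nonneg (bderiv t f x * g x + f (bflip t x) * bderiv t g x)]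
    calc _root_.expect (fun x => bderiv t (fun x => f x * g x) x * bderiv t (fun x => f x * g x) x)
        ≤ _root_.expect (fun x => 2 * (bderiv t f x * bderiv t f x)
            + 2 * (bderiv t g x * bderiv t g x)) := expect_mono hpt
      _ = 2 * _root_.expect (fun x => bderiv t f x * bderiv t f x)
            + 2 * _root_.expect (fun x => bderiv t g x * bderiv t g x) := expect_comb _ _
      _ = 2 * influence f t + 2 * influence g t := by
            rw [← influence_eq_expect, ← influence_eq_expect]
      _ ≤ 4 * ε := by linarith
  have h1 : (1:ℝ) ≤ ((l₁ * l₂ : ℕ) : ℝ) := by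
    have hc1 := card_pos_of_bool f hfb
    have hc2 := card_pos_of_bool g hgb
    rw [hl₁] at hc1; rw [hl₂] at hc2
    have : 1 * 1 ≤ l₁ * l₂ := Nat.mul_le_mul hc1 hc2
    exact_mod_cast this
  calc influence (fun x => f x * g x) t ≤ 4 * ε := key
    _ = 4 * ε * 1 := by ring
    _ ≤ 4 * ε * (l₁ * l₂ : ℕ) := by
        apply mul_le_mul_of_nonneg_left h1 (by linarith)
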